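/- Consider primal SDP min{⟨C,X⟩ : A(X) = b, X ⪰ 0} with optimal value p* attained, and its dual. If there exist optimal X* and dual slack Z* = C − A*(y*) ⪰ 0 with ⟨X*,Z*⟩ = 0 and rank(X*) + rank(Z*) = n (strict complementarity), then the singularity degree of the primal optimal set O_P = {X ⪰ 0 : A(X) = b, ⟨C,X⟩ = p*} is at most 1. -/

import Mathlib

open Matrix

lemma psd_full_rank_posDef {n : ℕ} {A : Matrix (Fin n) (Fin n) ℝ}
    (hA : A.PosSemidef) (h : A.rank = n) : A.PosDef := by
  have hinj : Function.Injective A.mulVecLin := by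
    have hsurj : Function.Surjective A.mulVecLin := by
      rw [← LinearMap.range_eq_top]
      apply Submodule.eq_top_of_finrank_eq
      simpa [Matrix.rank] using h
    exact (LinearMap.injective_iff_surjective).mpr hsurj
  refine .of_dotProduct_mulVec_pos hA.1 fun x hx => ?_
  have hAx : A *ᵥ x ≠ 0 := by
    intro h0
    exact hx (hinj (a₂ := 0) (by simpa using h0))
  exact lt_of_le_of_ne (hA.dotProduct_mulVec_nonneg x) (fun h0 => hAx ((hA.dotProduct_mulVec_zero_iff x).mp h0.symm))

theorem stmt11 {n m : ℕ} (S : Fin m → Matrix (Fin n) (Fin n) ℝ)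
    (hS : ∀ i, (S i).IsSymm) (b : Fin m → ℝ)
    (C : Matrix (Fin n) (Fin n) ℝ) (hC : C.IsSymm) (pstar : ℝ)
    (OP : Set (Matrix (Fin n) (Fin n) ℝ))
    (hOP : OP = {X | X.PosSemidef ∧ (∀ i, (S i * X).trace = b i) ∧ (C * X).trace = pstar})
    (Xstar : Matrix (Fin n) (Fin n) ℝ) (hXstar : Xstar ∈ OP)
    (ystar : Fin m → ℝ) (Zstar : Matrix (Fin n) (Fin n) ℝ)
    (hZdef : Zstar = C - ∑ i, ystar i • S i) (hZpsd : Zstar.PosSemidef)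
    (hcomp : (Xstar * Zstar).trace = 0)
    (hsc : Xstar.rank + Zstar.rank = n) :
    (∃ X ∈ OP, X.PosDef) ∨
      ∃ (τ : ℝ) (y : Fin m → ℝ),
        (τ • C + ∑ i, y i • S i).PosSemidef ∧
        (τ • C + ∑ i, y i • S i) ≠ 0 ∧
        τ * pstar + (∑ i, b i * y i) = 0 ∧
        (∀ X ∈ OP, ((τ • C + ∑ i, y i • S i) * X).trace = 0) ∧
        ∃ X ∈ OP, X.rank + (τ • C + ∑ i, y i • S i).rank = n := by
  subst hOP
  obtain ⟨hXpsd, hXfeas, hXobj⟩ := hXstar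
  -- key trace computation: for any feasible X, trace(Zstar * X) = pstar - ∑ b i * ystar i
  have htr : ∀ X : Matrix (Fin n) (Fin n) ℝ,
      (∀ i, (S i * X).trace = b i) → (C * X).trace = pstar →
      (Zstar * X).trace = pstar - ∑ i, b i * ystar i := by
    intro X hfeas hobj
    rw [hZdef, Matrix.sub_mul, Matrix.trace_sub, hobj, Finset.sum_mul, Matrix.trace_sum]
    congr 1
    rw [Finset.sum_congr rfl fun i _ => by
      rw [Matrix.smul_mul, Matrix.trace_smul, hfeas i, smul_eq_mul]]
    exact Finset.sum_congr rfl fun i _ => mul_comm _ _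
  have hsum : ∑ i, b i * ystar i = pstar := by
    have h1 : (Zstar * Xstar).trace = pstar - ∑ i, b i * ystar i := htr Xstar hXfeas hXobj
    have h2 : (Zstar * Xstar).trace = 0 := by rw [Matrix.trace_mul_comm]; exact hcomp
    linarith [h1, h2]
  by_cases hZ0 : Zstar = 0
  · left
    refine ⟨Xstar, ⟨hXpsd, hXfeas, hXobj⟩, ?_⟩
    apply psd_full_rank_posDef hXpsd
    have : Zstar.rank = 0 := by rw [hZ0]; exact Matrix.rank_zero
    omega
  · right
    refine ⟨1, fun i => -ystar i, ?_⟩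
    have hM : (1:ℝ) • C + ∑ i, (fun i => -ystar i) i • S i = Zstar := by
      rw [hZdef]
      simp [sub_eq_add_neg, neg_smul, Finset.sum_neg_distrib]
    rw [hM]
    refine ⟨hZpsd, hZ0, ?_, ?_, ⟨Xstar, ⟨hXpsd, hXfeas, hXobj⟩, hsc⟩⟩
    · simp only [one_mul]
      have : ∑ i, b i * -ystar i = -∑ i, b i * ystar i := by
        simp [mul_neg]
      rw [this, hsum]; ring
    · rintro X ⟨hXp, hXf, hXo⟩
      rw [htr X hXf hXo, hsum]; ring
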